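/- The series over primes ∑_{p prime} (log p)/(p^2 − p + 1) equals −∑_{n=2}^{∞} (ζ'(n)/ζ(n)) · ∑_{d | n} (2/√3) sin((d−1)π/3) · μ(n/d), and both series converge. -/

import Mathlib

open scoped Real

/-- The Riemann zeta function for real argument `x > 1`, `ζ(x) = ∑_{n ≥ 1} n^{-x}`. -/
noncomputable def zetaR (x : ℝ) : ℝ := ∑' n : ℕ, ((n : ℝ) + 1) ^ (-x)

/-- The derivative of the (real) Riemann zeta function. -/
noncomputable def zetaDerivR (x : ℝ) : ℝ := deriv zetaR x

noncomputable def bb (d : ℕ) : ℝ := 2 / Real.sqrt 3 * Real.sin (((d : ℝ) - 1) * π / 3)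

lemma sqrt3_pos : (0:ℝ) < Real.sqrt 3 := Real.sqrt_pos.2 (by norm_num)

lemma sqrt3_sq : Real.sqrt 3 * Real.sqrt 3 = 3 := Real.mul_self_sqrt (by norm_num)

lemma tds : 2 / Real.sqrt 3 * (Real.sqrt 3 / 2) = 1 := by
  rw [div_mul_div_comm, div_eq_one_iff_eq (by positivity)]
  nlinarith [sqrt3_sq]

lemma bb_add_six (d : ℕ) : bb (d + 6) = bb d := by
  unfold bb
  have : (((d:ℝ) + 6) - 1) * π / 3 = ((d:ℝ) - 1) * π / 3 + 2 * π := by ring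
  rw [show ((((d+6):ℕ):ℝ) - 1) * π / 3 = ((d:ℝ) - 1) * π / 3 + 2 * π by push_cast; ring,
    Real.sin_add_two_pi]

lemma bb0 : bb 0 = -1 := by
  unfold bb
  rw [show (((0:ℕ):ℝ) - 1) * π / 3 = -(π/3) by push_cast; ring, Real.sin_neg,
    Real.sin_pi_div_three]
  rw [mul_neg, tds]

lemma bb1 : bb 1 = 0 := by
  unfold bb
  rw [show (((1:ℕ):ℝ) - 1) * π / 3 = 0 by push_cast; ring, Real.sin_zero, mul_zero]

lemma bb2 : bb 2 = 1 := by
  unfold bb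
  rw [show (((2:ℕ):ℝ) - 1) * π / 3 = π/3 by push_cast; ring, Real.sin_pi_div_three, tds]

lemma bb3 : bb 3 = 1 := by
  unfold bb
  rw [show (((3:ℕ):ℝ) - 1) * π / 3 = π - π/3 by push_cast; ring, Real.sin_pi_sub,
    Real.sin_pi_div_three, tds]

lemma bb4 : bb 4 = 0 := by
  unfold bb
  rw [show (((4:ℕ):ℝ) - 1) * π / 3 = π by push_cast; ring, Real.sin_pi, mul_zero]

lemma bb5 : bb 5 = -1 := by
  unfold bb
  rw [show (((5:ℕ):ℝ) - 1) * π / 3 = π + π/3 by push_cast; ring, Real.sin_add,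
    Real.sin_pi, Real.cos_pi, Real.sin_pi_div_three]
  rw [show (0 * Real.cos (π/3) + -1 * (√3/2)) = -(√3/2) by ring, mul_neg, tds]

lemma bb_abs_le (d : ℕ) : |bb d| ≤ 2 := by
  unfold bb
  rw [abs_mul]
  have h1 : |2 / Real.sqrt 3| ≤ 2 := by
    rw [abs_of_pos (by positivity), div_le_iff₀ sqrt3_pos]
    nlinarith [sqrt3_sq, sqrt3_pos]
  calc |2 / Real.sqrt 3| * |Real.sin _| ≤ 2 * 1 := by
        exact mul_le_mul h1 (Real.abs_sin_le_one _) (abs_nonneg _) (by norm_num)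
    _ = 2 := by norm_num

lemma bb_rec : ∀ d : ℕ, bb (d + 2) = bb (d + 1) - bb d := by
  intro d
  induction d using Nat.strong_induction_on with
  | _ d ih =>
    match d with
    | 0 => rw [bb0, bb1, bb2]; ring
    | 1 => rw [bb1, bb2, bb3]; ring
    | 2 => rw [bb2, bb3, bb4]; ring
    | 3 => rw [bb3, bb4, bb5]; ring
    | 4 => rw [bb4, bb5, show (4+2 : ℕ) = 0 + 6 from rfl, bb_add_six, bb0]; ring
    | 5 => rw [bb5, show (5+2 : ℕ) = 1 + 6 from rfl, show (5+1:ℕ) = 0+6 from rfl,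
             bb_add_six, bb_add_six, bb0, bb1]; ring
    | (k+6) =>
      rw [show k+6+2 = (k+2)+6 by ring, show k+6+1 = (k+1)+6 by ring,
        bb_add_six, bb_add_six, bb_add_six]
      exact ih k (by omega)
lemma summable_bb_shift (x : ℝ) (hx : |x| < 1) (j : ℕ) :
    Summable (fun M : ℕ => bb (M + j) * x ^ M) := by
  apply Summable.of_norm_bounded ((summable_geometric_of_lt_one (abs_nonneg x) hx).mul_left 2)
  intro M
  rw [norm_mul, norm_pow, Real.norm_eq_abs, Real.norm_eq_abs]
  exact mul_le_mul_of_nonneg_right (bb_abs_le _) (by positivity)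

lemma bb_tsum_eq (x : ℝ) (hx : |x| < 1) :
    HasSum (fun M : ℕ => bb (M + 2) * x ^ (M + 2)) (x ^ 2 / (1 - x + x ^ 2)) := by
  have hu := summable_bb_shift x hx 2
  have hv := summable_bb_shift x hx 1
  have hw := summable_bb_shift x hx 0
  simp only [Nat.add_zero] at hw
  set T : ℝ := ∑' M : ℕ, bb (M + 2) * x ^ M with hT
  have h2 : ∑' M : ℕ, bb (M + 1) * x ^ M = x * T := by
    rw [hv.tsum_eq_zero_add, bb1, zero_mul, zero_add, hT, ← tsum_mul_left]
    congr 1; ext M; ring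
  have h3 : ∑' M : ℕ, bb M * x ^ M = -1 + x * (x * T) := by
    rw [hw.tsum_eq_zero_add, bb0, ← h2, ← tsum_mul_left]
    congr 2
    · norm_num
    ext M; ring
  have h1 : ∀ M : ℕ, bb (M + 2) * x ^ M = bb (M + 1) * x ^ M - bb M * x ^ M := by
    intro M; rw [bb_rec]; ring
  have h4 : T = x * T - (-1 + x * (x * T)) := by
    calc T = ∑' M : ℕ, (bb (M + 1) * x ^ M - bb M * x ^ M) := tsum_congr h1
    _ = (∑' M : ℕ, bb (M + 1) * x ^ M) - ∑' M : ℕ, bb M * x ^ M := hv.tsum_sub hw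
    _ = x * T - (-1 + x * (x * T)) := by rw [h2, h3]
  have hq : (0:ℝ) < 1 - x + x ^ 2 := by nlinarith [sq_nonneg (x - 1)]
  have hTval : T = 1 / (1 - x + x ^ 2) := by
    field_simp
    nlinarith [h4]
  have := (hu.hasSum).mul_left (x ^ 2)
  rw [← hT, hTval] at this
  convert this using 1
  · rfl
  · funext M; ring
  · rw [mul_one_div]
noncomputable def cc (N : ℕ) : ℝ :=
  ∑ d ∈ N.divisors, bb d * (ArithmeticFunction.moebius (N / d) : ℝ)

lemma cc_one : cc 1 = 0 := by
  unfold cc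
  rw [Nat.divisors_one]
  simp [bb1]

lemma sum_cc (M : ℕ) (hM : 0 < M) : ∑ e ∈ M.divisors, cc e = bb M := by
  have key : ∀ n > 0, ∑ x ∈ n.divisorsAntidiagonal,
      ((ArithmeticFunction.moebius x.1 : ℝ)) * bb x.2 = cc n := by
    intro n hn
    rw [Nat.sum_divisorsAntidiagonal' (f := fun a b => ((ArithmeticFunction.moebius a : ℝ)) * bb b)]
    unfold cc
    exact Finset.sum_congr rfl fun d _ => by ring
  exact (ArithmeticFunction.sum_eq_iff_sum_mul_moebius_eq (f := cc) (g := bb)).2 key M hM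

lemma moebius_abs_le (m : ℕ) : |(ArithmeticFunction.moebius m : ℝ)| ≤ 1 := by
  by_cases h : Squarefree m
  · rw [ArithmeticFunction.moebius_apply_of_squarefree h]
    push_cast
    rw [abs_pow, abs_neg, abs_one, one_pow]
  · rw [ArithmeticFunction.moebius_eq_zero_of_not_squarefree h]
    norm_num

lemma cc_abs_le (N : ℕ) : |cc N| ≤ 2 * (N + 1) := by
  unfold cc
  calc |∑ d ∈ N.divisors, bb d * (ArithmeticFunction.moebius (N / d) : ℝ)|
      ≤ ∑ d ∈ N.divisors, |bb d * (ArithmeticFunction.moebius (N / d) : ℝ)| :=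
        Finset.abs_sum_le_sum_abs _ _
    _ ≤ ∑ _d ∈ N.divisors, 2 := by
        refine Finset.sum_le_sum fun d _ => ?_
        rw [abs_mul]
        calc |bb d| * |(ArithmeticFunction.moebius (N / d) : ℝ)| ≤ 2 * 1 :=
              mul_le_mul (bb_abs_le d) (moebius_abs_le _) (abs_nonneg _) (by norm_num)
          _ = 2 := by norm_num
    _ = 2 * N.divisors.card := by rw [Finset.sum_const, nsmul_eq_mul]; ring
    _ ≤ 2 * (N + 1) := by
        have : N.divisors.card ≤ N + 1 := by
          have : N.divisors ⊆ Finset.range (N + 1) := by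
            intro d hd
            rw [Finset.mem_range]
            exact Nat.lt_succ_of_le (Nat.divisor_le hd)
          calc N.divisors.card ≤ (Finset.range (N+1)).card := Finset.card_le_card this
            _ = N + 1 := Finset.card_range _
        have h2 : (N.divisors.card : ℝ) ≤ (N:ℝ) + 1 := by exact_mod_cast this
        nlinarith
open ArithmeticFunction in
noncomputable def Lr (x : ℝ) : ℝ := ∑' m : ℕ, Λ m * (m : ℝ) ^ (-x)

lemma summable_zetaR_terms {x : ℝ} (hx : 1 < x) :
    Summable (fun n : ℕ => ((n : ℝ) + 1) ^ (-x)) := by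
  have h : Summable (fun n : ℕ => ((n + 1 : ℕ) : ℝ) ^ (-x)) :=
    (summable_nat_add_iff 1).2 (Real.summable_nat_rpow.2 (by linarith))
  refine h.congr fun n => ?_
  push_cast; ring_nf

lemma zetaR_eq {x : ℝ} (hx : 1 < x) : (zetaR x : ℂ) = riemannZeta x := by
  rw [zeta_eq_tsum_one_div_nat_add_one_cpow (by simpa using hx)]
  unfold zetaR
  rw [Complex.ofReal_tsum]
  refine tsum_congr fun n => ?_
  have h0 : (0:ℝ) ≤ (n : ℝ) + 1 := by positivity
  rw [Complex.ofReal_cpow h0, Complex.ofReal_neg]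
  push_cast
  rw [Complex.cpow_neg, one_div]

lemma zetaR_pos {x : ℝ} (hx : 1 < x) : 0 < zetaR x := by
  refine Summable.tsum_pos (summable_zetaR_terms hx) (fun n => Real.rpow_nonneg (by positivity) _) 0 ?_
  exact Real.rpow_pos_of_pos (by norm_num) _

open ArithmeticFunction in
lemma term_eq {x : ℝ} (m : ℕ) :
    LSeries.term (fun n => ((Λ n : ℝ) : ℂ)) x m = ((Λ m * (m : ℝ) ^ (-x) : ℝ) : ℂ) := by
  rcases eq_or_ne m 0 with rfl | hm
  · simp [LSeries.term_def]
  · rw [LSeries.term_def, if_neg hm]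
    have h0 : (0:ℝ) ≤ (m : ℝ) := by positivity
    rw [Complex.ofReal_mul, Complex.ofReal_cpow h0, Complex.ofReal_neg, Complex.cpow_neg]
    rw [Complex.ofReal_natCast]
    ring

open ArithmeticFunction in
lemma summable_Lr {x : ℝ} (hx : 1 < x) :
    Summable (fun m : ℕ => Λ m * (m : ℝ) ^ (-x)) := by
  have h : LSeriesSummable (fun n => ((Λ n : ℝ) : ℂ)) x :=
    LSeriesSummable_vonMangoldt (by simpa using hx)
  have h2 : Summable (fun m : ℕ => ((Λ m * (m : ℝ) ^ (-x) : ℝ) : ℂ)) := by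
    refine h.congr fun m => (term_eq m)
  exact Complex.summable_ofReal.1 h2

open ArithmeticFunction in
lemma LSeries_Lr {x : ℝ} (hx : 1 < x) :
    LSeries (fun n => ((Λ n : ℝ) : ℂ)) x = ((Lr x : ℝ) : ℂ) := by
  unfold LSeries Lr
  rw [Complex.ofReal_tsum]
  exact tsum_congr fun m => term_eq m

lemma zetaDerivR_eq {x : ℝ} (hx : 1 < x) : zetaDerivR x = -(Lr x) * zetaR x := by
  have hne : (x : ℂ) ≠ 1 := by
    intro h
    have : x = 1 := by exact_mod_cast h
    linarith
  have hdiff := (differentiableAt_riemannZeta hne).hasDerivAt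
  have hre : HasDerivAt (fun t : ℝ => (riemannZeta t).re) (deriv riemannZeta x).re x :=
    hdiff.real_of_complex
  have hEq : zetaR =ᶠ[nhds x] fun t : ℝ => (riemannZeta t).re := by
    filter_upwards [isOpen_Ioi.mem_nhds hx] with t ht
    rw [← zetaR_eq ht, Complex.ofReal_re]
  have hz : HasDerivAt zetaR (deriv riemannZeta x).re x := hre.congr_of_eventuallyEq hEq
  have hd : zetaDerivR x = (deriv riemannZeta x).re := hz.deriv
  have hL := ArithmeticFunction.LSeries_vonMangoldt_eq_deriv_riemannZeta_div
    (s := (x:ℂ)) (by simpa using hx)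
  rw [LSeries_Lr hx] at hL
  have hzne : riemannZeta x ≠ 0 := riemannZeta_ne_zero_of_one_lt_re (by simpa using hx)
  have hval : deriv riemannZeta x = ((-(Lr x) * zetaR x : ℝ) : ℂ) := by
    have := hL
    field_simp at this
    rw [← zetaR_eq hx] at this
    push_cast
    linear_combination this
  rw [hd, hval, Complex.ofReal_re]

lemma zeta_ratio_eq {x : ℝ} (hx : 1 < x) : zetaDerivR x / zetaR x = -Lr x := by
  rw [zetaDerivR_eq hx, mul_div_assoc, div_self (zetaR_pos hx).ne', mul_one]
noncomputable def PF : Nat.Primes × ℕ → ℕ := fun q => (q.1 : ℕ) ^ (q.2 + 1)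

lemma PF_inj : Function.Injective PF := by
  rintro ⟨p, k⟩ ⟨q, j⟩ h
  unfold PF at h
  simp only at h
  have hpq : (p : ℕ) = (q : ℕ) := by
    have hp : (p:ℕ).Prime := p.2
    have hq : (q:ℕ).Prime := q.2
    have hdvd : (p:ℕ) ∣ (q:ℕ) ^ (j + 1) := h ▸ dvd_pow_self (p:ℕ) (Nat.succ_ne_zero k)
    exact (Nat.prime_dvd_prime_iff_eq hp hq).1 (hp.dvd_of_dvd_pow hdvd)
  have hpq' : p = q := Subtype.ext hpq
  subst hpq'
  have hk : k + 1 = j + 1 := Nat.pow_right_injective p.2.two_le h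
  simp only [Prod.mk.injEq]
  exact ⟨trivial, by omega⟩

open ArithmeticFunction in
lemma PF_range {m : ℕ} (hm : Λ m ≠ 0) : m ∈ Set.range PF := by
  obtain ⟨p, k, hp, hk, rfl⟩ := (ArithmeticFunction.vonMangoldt_ne_zero_iff).1 hm
  rw [← Nat.prime_iff] at hp
  exact ⟨(⟨p, hp⟩, k - 1), by simp only [PF]; congr 1; omega⟩

open ArithmeticFunction in
lemma hasSum_A (n : ℕ) :
    HasSum (fun q : Nat.Primes × ℕ =>
        Real.log ((q.1 : ℕ) : ℝ) * (((q.1 : ℕ) : ℝ)⁻¹) ^ ((q.2 + 1) * (n + 2)))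
      (Lr ((n : ℝ) + 2)) := by
  have hx : (1:ℝ) < (n : ℝ) + 2 := by
    have : (0:ℝ) ≤ (n:ℝ) := Nat.cast_nonneg n
    linarith
  have hs : HasSum (fun m : ℕ => Λ m * (m : ℝ) ^ (-((n:ℝ) + 2))) (Lr ((n:ℝ) + 2)) :=
    (summable_Lr hx).hasSum
  have vanish : ∀ m ∉ Set.range PF, Λ m * (m : ℝ) ^ (-((n:ℝ) + 2)) = 0 := by
    intro m hm
    by_contra hne
    exact hm (PF_range fun h => hne (by rw [h, zero_mul]))
  have hcomp := (Function.Injective.hasSum_iff PF_inj vanish).2 hs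
  have heq : (fun q : Nat.Primes × ℕ => Real.log ((q.1:ℕ):ℝ) * (((q.1:ℕ):ℝ)⁻¹) ^ ((q.2+1)*(n+2)))
      = (fun m : ℕ => Λ m * (m : ℝ) ^ (-((n:ℝ) + 2))) ∘ PF := by
    funext q
    obtain ⟨p, k⟩ := q
    simp only [Function.comp, PF]
    have h1 : Λ ((p:ℕ) ^ (k+1)) = Real.log ((p:ℕ):ℝ) := by
      rw [ArithmeticFunction.vonMangoldt_apply_pow (Nat.succ_ne_zero k),
        ArithmeticFunction.vonMangoldt_apply_prime p.2]
    have hp0 : (0:ℝ) < ((p:ℕ):ℝ) := by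
      exact_mod_cast p.2.pos
    have h2 : ((((p:ℕ) ^ (k+1) : ℕ)) : ℝ) ^ (-((n:ℝ) + 2))
        = (((p:ℕ):ℝ)⁻¹) ^ ((k+1)*(n+2)) := by
      push_cast
      rw [show -((n:ℝ)+2) = -(((n+2 : ℕ):ℝ)) by push_cast; ring]
      rw [Real.rpow_neg (by positivity), Real.rpow_natCast, ← pow_mul, ← inv_pow]
    rw [h1, h2]
  rw [heq]
  exact hcomp
lemma log_le_two_sqrt {m : ℕ} (hm : 2 ≤ m) : Real.log m ≤ 2 * Real.sqrt m := by
  have h0 : (0:ℝ) < (m:ℝ) := by positivity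
  have h1 : Real.log (m:ℝ) = 2 * Real.log (Real.sqrt m) := by
    rw [Real.log_sqrt h0.le]; ring
  have h2 : Real.log (Real.sqrt m) ≤ Real.sqrt m - 1 :=
    Real.log_le_sub_one_of_pos (Real.sqrt_pos.2 h0)
  nlinarith [Real.sqrt_nonneg (m:ℝ)]

lemma summable_logp :
    Summable (fun p : Nat.Primes => Real.log ((p:ℕ):ℝ) * (((p:ℕ):ℝ)⁻¹) ^ 2) := by
  have base : Summable (fun m : ℕ => 2 * ((m:ℝ) ^ (-(3/2 : ℝ)))) :=
    (Real.summable_nat_rpow.2 (by norm_num)).mul_left 2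
  have comp : Summable (fun p : Nat.Primes => 2 * (((p:ℕ):ℝ) ^ (-(3/2 : ℝ)))) :=
    base.comp_injective Nat.Primes.coe_nat_injective
  refine Summable.of_nonneg_of_le (fun p => ?_) (fun p => ?_) comp
  · have h1 : (1:ℝ) ≤ ((p:ℕ):ℝ) := by exact_mod_cast p.2.one_lt.le
    exact mul_nonneg (Real.log_nonneg h1) (by positivity)
  · have hp2 : (2:ℝ) ≤ ((p:ℕ):ℝ) := by exact_mod_cast p.2.two_le
    have hp0 : (0:ℝ) < ((p:ℕ):ℝ) := by linarith
    have hlog := log_le_two_sqrt p.2.two_le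
    have e1 : (((p:ℕ):ℝ)⁻¹) ^ 2 = ((p:ℕ):ℝ) ^ (-(2:ℝ)) := by
      rw [Real.rpow_neg hp0.le, inv_pow, ← Real.rpow_natCast ((p:ℕ):ℝ) 2]
      norm_num
    calc Real.log ((p:ℕ):ℝ) * (((p:ℕ):ℝ)⁻¹) ^ 2
        ≤ (2 * Real.sqrt ((p:ℕ):ℝ)) * (((p:ℕ):ℝ)⁻¹) ^ 2 := by
          exact mul_le_mul_of_nonneg_right hlog (by positivity)
      _ = 2 * (((p:ℕ):ℝ) ^ (-(3/2 : ℝ))) := by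
          rw [e1, Real.sqrt_eq_rpow, mul_assoc, ← Real.rpow_add hp0]
          norm_num

lemma inv_p_le_half {p : Nat.Primes} : (((p:ℕ):ℝ)⁻¹) ≤ 1/2 := by
  have hp2 : (2:ℝ) ≤ ((p:ℕ):ℝ) := by exact_mod_cast p.2.two_le
  rw [show (1:ℝ)/2 = (2:ℝ)⁻¹ by norm_num]
  exact inv_anti₀ (by norm_num) hp2

noncomputable def JJ : Nat.Primes × ℕ × ℕ → ℝ := fun q =>
  Real.log ((q.1:ℕ):ℝ) * (((q.1:ℕ):ℝ)⁻¹) ^ ((q.2.1 + 1) * (q.2.2 + 2)) * cc (q.2.2 + 2)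

set_option maxHeartbeats 1000000 in
lemma summable_JJ : Summable JJ := by
  have hgeom4 : Summable (fun k : ℕ => ((1:ℝ)/4) ^ k) :=
    summable_geometric_of_lt_one (by norm_num) (by norm_num)
  have hn : Summable (fun n : ℕ => (2 * ((n:ℝ) + 3)) * ((1:ℝ)/2) ^ n) := by
    have h1 : Summable (fun n : ℕ => (n:ℝ) ^ 1 * ((1:ℝ)/2) ^ n) :=
      summable_pow_mul_geometric_of_norm_lt_one 1 (by rw [Real.norm_eq_abs, abs_of_pos] <;> norm_num)
    have h2 : Summable (fun n : ℕ => ((1:ℝ)/2) ^ n) :=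
      summable_geometric_of_lt_one (by norm_num) (by norm_num)
    have := (h1.mul_left 2).add ((h2.mul_left 6))
    refine this.congr fun n => ?_
    push_cast; ring
  have hkn : Summable (fun x : ℕ × ℕ => ((1:ℝ)/4) ^ x.1 * ((2 * ((x.2:ℝ) + 3)) * ((1:ℝ)/2) ^ x.2)) :=
    hgeom4.mul_of_nonneg hn (fun k => by positivity) (fun n => by positivity)
  have hfull : Summable (fun x : Nat.Primes × ℕ × ℕ =>
      (Real.log ((x.1:ℕ):ℝ) * (((x.1:ℕ):ℝ)⁻¹) ^ 2) *
        (((1:ℝ)/4) ^ x.2.1 * ((2 * ((x.2.2:ℝ) + 3)) * ((1:ℝ)/2) ^ x.2.2))) := by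
    refine summable_logp.mul_of_nonneg hkn (fun p => ?_) (fun x => ?_)
    · have h1 : (1:ℝ) ≤ ((p:ℕ):ℝ) := by exact_mod_cast p.2.one_lt.le
      exact mul_nonneg (Real.log_nonneg h1) (by positivity)
    · positivity
  refine Summable.of_norm_bounded hfull fun q => ?_
  obtain ⟨p, k, n⟩ := q
  have hp2 : (2:ℝ) ≤ ((p:ℕ):ℝ) := by exact_mod_cast p.2.two_le
  have hy0 : (0:ℝ) ≤ ((p:ℕ):ℝ)⁻¹ := by positivity
  have hy1 : ((p:ℕ):ℝ)⁻¹ ≤ 1 := by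
    calc ((p:ℕ):ℝ)⁻¹ ≤ 1/2 := inv_p_le_half
      _ ≤ 1 := by norm_num
  have hlog0 : 0 ≤ Real.log ((p:ℕ):ℝ) := Real.log_nonneg (by linarith)
  have hccb := cc_abs_le (n + 2)
  have hpowsplit : (((p:ℕ):ℝ)⁻¹) ^ ((k + 1) * (n + 2))
      ≤ (((p:ℕ):ℝ)⁻¹) ^ 2 * (((1:ℝ)/4) ^ k * ((1:ℝ)/2) ^ n) := by
    calc (((p:ℕ):ℝ)⁻¹) ^ ((k + 1) * (n + 2)) ≤ (((p:ℕ):ℝ)⁻¹) ^ (2 + 2*k + n) := by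
          refine pow_le_pow_of_le_one hy0 hy1 (by nlinarith [Nat.zero_le (k*n)])
      _ = (((p:ℕ):ℝ)⁻¹) ^ 2 * ((((p:ℕ):ℝ)⁻¹)^2) ^ k * (((p:ℕ):ℝ)⁻¹) ^ n := by
          rw [pow_add, pow_add, pow_mul]
      _ ≤ (((p:ℕ):ℝ)⁻¹) ^ 2 * (((1:ℝ)/4) ^ k * ((1:ℝ)/2) ^ n) := by
          rw [mul_assoc]
          refine mul_le_mul_of_nonneg_left ?_ (by positivity)
          refine mul_le_mul ?_ ?_ (by positivity) (by positivity)
          · refine pow_le_pow_left₀ (by positivity) ?_ k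
            calc (((p:ℕ):ℝ)⁻¹)^2 ≤ (1/2:ℝ)^2 := pow_le_pow_left₀ hy0 inv_p_le_half 2
              _ = 1/4 := by norm_num
          · exact pow_le_pow_left₀ hy0 inv_p_le_half n
  have hccn : |cc (n + 2)| ≤ 2 * ((n:ℝ) + 3) := by
    have := cc_abs_le (n + 2)
    push_cast at this ⊢
    linarith
  calc ‖JJ (p, k, n)‖
      = Real.log ((p:ℕ):ℝ) * (((p:ℕ):ℝ)⁻¹) ^ ((k + 1) * (n + 2)) * |cc (n + 2)| := by
        rw [Real.norm_eq_abs]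
        unfold JJ
        rw [abs_mul, abs_mul, abs_of_nonneg hlog0, abs_of_nonneg (by positivity)]
    _ ≤ Real.log ((p:ℕ):ℝ) * ((((p:ℕ):ℝ)⁻¹) ^ 2 * (((1:ℝ)/4) ^ k * ((1:ℝ)/2) ^ n))
          * (2 * ((n:ℝ) + 3)) := by
        refine mul_le_mul ?_ hccn (abs_nonneg _) (by positivity)
        exact mul_le_mul_of_nonneg_left hpowsplit hlog0
    _ = (Real.log ((p:ℕ):ℝ) * (((p:ℕ):ℝ)⁻¹) ^ 2) *
          (((1:ℝ)/4) ^ k * ((2 * ((n:ℝ) + 3)) * ((1:ℝ)/2) ^ n)) := by ring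
lemma geom_prime (p : Nat.Primes) :
    HasSum (fun M : ℕ => bb (M + 2) * (((p:ℕ):ℝ)⁻¹) ^ (M + 2))
      (1 / (((p:ℕ):ℝ) ^ 2 - ((p:ℕ):ℝ) + 1)) := by
  have hp2 : (2:ℝ) ≤ ((p:ℕ):ℝ) := by exact_mod_cast p.2.two_le
  have hp0 : (0:ℝ) < ((p:ℕ):ℝ) := by linarith
  have hy : |(((p:ℕ):ℝ)⁻¹)| < 1 := by
    rw [abs_of_pos (by positivity)]
    calc (((p:ℕ):ℝ)⁻¹) ≤ 1/2 := inv_p_le_half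
      _ < 1 := by norm_num
  have h := bb_tsum_eq (((p:ℕ):ℝ)⁻¹) hy
  convert h using 1
  have hq1 : ((p:ℕ):ℝ) ^ 2 - ((p:ℕ):ℝ) + 1 ≠ 0 := by nlinarith
  have hq2 : 1 - (((p:ℕ):ℝ)⁻¹) + (((p:ℕ):ℝ)⁻¹) ^ 2 ≠ 0 := by
    have h2 : (((p:ℕ):ℝ)⁻¹) ≤ 1/2 := inv_p_le_half
    have h3 : (0:ℝ) < (((p:ℕ):ℝ)⁻¹) := by positivity
    nlinarith
  rw [div_eq_div_iff hq1 hq2, one_mul]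
  field_simp

set_option maxHeartbeats 1000000 in
lemma row_hasSum (p : Nat.Primes) :
    HasSum (fun kn : ℕ × ℕ => JJ (p, kn))
      (Real.log ((p:ℕ):ℝ) / (((p:ℕ):ℝ) ^ 2 - ((p:ℕ):ℝ) + 1)) := by
  have hrow : Summable (fun kn : ℕ × ℕ => JJ (p, kn)) :=
    summable_JJ.comp_injective (fun kn kn' h => by
      simpa using congrArg Prod.snd h)
  set y : ℝ := ((p:ℕ):ℝ)⁻¹ with hy
  set lg : ℝ := Real.log ((p:ℕ):ℝ) with hlg
  -- the re-indexed family
  set L : ℕ × ℕ → ℝ := fun Md =>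
    if Md.2 ∈ Md.1.divisors ∧ 2 ≤ Md.2 then lg * y ^ Md.1 * cc Md.2 else 0 with hL
  set e : ℕ × ℕ → ℕ × ℕ := fun kn => ((kn.1 + 1) * (kn.2 + 2), kn.2 + 2) with he
  have he_inj : Function.Injective e := by
    rintro ⟨k, n⟩ ⟨k', n'⟩ h
    simp only [he, Prod.mk.injEq] at h
    obtain ⟨h1, h2⟩ := h
    have hn : n = n' := by omega
    subst hn
    have : k = k' := by
      have := Nat.eq_of_mul_eq_mul_right (show 0 < n + 2 by omega) h1
      omega
    simp [this]
  have hLe : ∀ kn : ℕ × ℕ, L (e kn) = JJ (p, kn) := by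
    rintro ⟨k, n⟩
    simp only [hL, he]
    rw [if_pos]
    · rfl
    constructor
    · rw [Nat.mem_divisors]
      exact ⟨dvd_mul_left _ _, by positivity⟩
    · omega
  have hvanish : ∀ Md ∉ Set.range e, L Md = 0 := by
    rintro ⟨M, d⟩ hMd
    by_contra hne
    simp only [hL] at hne
    rw [ite_eq_right_iff] at hne
    push_neg at hne
    obtain ⟨⟨hdvd, hd2⟩, _⟩ := hne
    rw [Nat.mem_divisors] at hdvd
    obtain ⟨hdvd, hM0⟩ := hdvd
    refine hMd ⟨(M / d - 1, d - 2), ?_⟩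
    have hq : 1 ≤ M / d := Nat.one_le_div_iff (by omega) |>.2 (Nat.le_of_dvd (Nat.pos_of_ne_zero hM0) hdvd)
    simp only [he, Prod.mk.injEq]
    constructor
    · rw [show M / d - 1 + 1 = M / d by omega, show d - 2 + 2 = d by omega]
      exact Nat.div_mul_cancel hdvd
    · omega
  have hLrow : (fun kn : ℕ × ℕ => JJ (p, kn)) = L ∘ e := by
    funext kn; rw [Function.comp_apply, hLe]
  have hLsum : Summable L := by
    rw [← Function.Injective.summable_iff he_inj hvanish, ← hLrow]
    exact hrow
  have hsupp : Function.support L ⊆ Set.range e := by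
    intro Md hMd
    by_contra hc
    exact hMd (hvanish Md hc)
  have ht1 : (∑' kn : ℕ × ℕ, JJ (p, kn)) = ∑' Md : ℕ × ℕ, L Md :=
    calc (∑' kn : ℕ × ℕ, JJ (p, kn)) = ∑' kn : ℕ × ℕ, L (e kn) :=
          tsum_congr fun kn => (hLe kn).symm
    _ = ∑' Md : ℕ × ℕ, L Md := he_inj.tsum_eq hsupp
  have ht2 : (∑' Md : ℕ × ℕ, L Md) = ∑' M : ℕ, ∑' d : ℕ, L (M, d) := hLsum.tsum_prod
  set g : ℕ → ℝ := fun M => if M = 0 then 0 else lg * y ^ M * bb M with hg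
  have hinner : ∀ M : ℕ, (∑' d : ℕ, L (M, d)) = g M := by
    intro M
    have hts : (∑' d : ℕ, L (M, d)) = ∑ d ∈ M.divisors, L (M, d) :=
      tsum_eq_sum (fun d hd => by
        simp only [hL]; rw [if_neg]; exact fun hc => hd hc.1)
    rcases eq_or_ne M 0 with rfl | hM0
    · simp [hts, hg, hL]
    · rw [hts]
      simp only [hg]
      rw [if_neg hM0]
      have hstep : ∀ d ∈ M.divisors, L (M, d) = if 2 ≤ d then lg * y ^ M * cc d else 0 := by
        intro d hd
        simp only [hL]
        by_cases h2 : 2 ≤ d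
        · rw [if_pos ⟨hd, h2⟩, if_pos h2]
        · rw [if_neg (fun hc => h2 hc.2), if_neg h2]
      rw [Finset.sum_congr rfl hstep, ← Finset.sum_filter]
      have hfe : M.divisors.filter (fun d => 2 ≤ d) = M.divisors.erase 1 := by
        ext d
        simp only [Finset.mem_filter, Finset.mem_erase, Nat.mem_divisors]
        constructor
        · rintro ⟨⟨hdvd, hM⟩, h2⟩
          exact ⟨by omega, hdvd, hM⟩
        · rintro ⟨h1, hdvd, hM⟩
          have hd0 : d ≠ 0 := by
            rintro rfl
            exact hM0 (Nat.eq_zero_of_zero_dvd hdvd)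
          exact ⟨⟨hdvd, hM⟩, by omega⟩
      rw [hfe, Finset.sum_erase_eq_sub (Nat.one_mem_divisors.2 hM0), ← Finset.mul_sum,
        sum_cc M (Nat.pos_of_ne_zero hM0), cc_one, mul_zero, sub_zero]
  have hgsupp : Function.support g ⊆ Set.range (fun M : ℕ => M + 2) := by
    intro M hM
    rw [Function.mem_support] at hM
    rcases M with _ | _ | M
    · exact absurd (by simp [hg]) hM
    · exact absurd (by simp [hg, bb1]) hM
    · exact ⟨M, rfl⟩
  have hshift_inj : Function.Injective (fun M : ℕ => M + 2) := fun a b h => by simpa using h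
  have ht3 : (∑' M : ℕ, g (M + 2)) = ∑' M : ℕ, g M := hshift_inj.tsum_eq hgsupp
  have ht4 : (∑' M : ℕ, g (M + 2)) = lg * (1 / (((p:ℕ):ℝ) ^ 2 - ((p:ℕ):ℝ) + 1)) := by
    have : (∑' M : ℕ, g (M + 2)) = ∑' M : ℕ, lg * (bb (M + 2) * y ^ (M + 2)) := by
      refine tsum_congr fun M => ?_
      simp only [hg]
      rw [if_neg (by omega : ¬(M + 2 = 0))]
      ring_nf
    rw [this, tsum_mul_left, (geom_prime p).tsum_eq]
  refine (hrow.hasSum_iff).2 ?_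
  rw [ht1, ht2, tsum_congr hinner, ← ht3, ht4, mul_one_div]
noncomputable def e2 : ℕ × (Nat.Primes × ℕ) ≃ Nat.Primes × ℕ × ℕ where
  toFun x := (x.2.1, x.2.2, x.1)
  invFun x := (x.2.2, (x.1, x.2.1))
  left_inv := fun ⟨n, p, k⟩ => rfl
  right_inv := fun ⟨p, k, n⟩ => rfl

set_option maxHeartbeats 1000000 in
/-- `∑_{p prime} (log p)/(p² - p + 1)
  = -∑_{n ≥ 2} (ζ'(n)/ζ(n)) · ∑_{d∣n} (2/√3)·sin((d-1)π/3)·μ(n/d)`,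
both series converging. -/
theorem statement4 :
    Summable
      (fun p : Nat.Primes =>
        Real.log ((p : ℕ) : ℝ) / (((p : ℕ) : ℝ) ^ 2 - ((p : ℕ) : ℝ) + 1)) ∧
    HasSum
      (fun n : ℕ =>
        (zetaDerivR ((n : ℝ) + 2) / zetaR ((n : ℝ) + 2)) *
          ∑ d ∈ (n + 2).divisors,
            (2 / Real.sqrt 3) * Real.sin (((d : ℝ) - 1) * π / 3) *
              (ArithmeticFunction.moebius ((n + 2) / d) : ℝ))
      (-(∑' p : Nat.Primes,
          Real.log ((p : ℕ) : ℝ) / (((p : ℕ) : ℝ) ^ 2 - ((p : ℕ) : ℝ) + 1))) := by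
  have hJ := summable_JJ
  have hA : HasSum
      (fun p : Nat.Primes =>
        Real.log ((p : ℕ) : ℝ) / (((p : ℕ) : ℝ) ^ 2 - ((p : ℕ) : ℝ) + 1))
      (∑' q, JJ q) := hJ.hasSum.prod_fiberwise row_hasSum
  refine ⟨hA.summable, ?_⟩
  have hS : (∑' p : Nat.Primes,
      Real.log ((p : ℕ) : ℝ) / (((p : ℕ) : ℝ) ^ 2 - ((p : ℕ) : ℝ) + 1)) = ∑' q, JJ q :=
    hA.tsum_eq
  have hJ2 : HasSum (JJ ∘ e2) (∑' q, JJ q) :=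
    (Equiv.hasSum_iff e2).2 hJ.hasSum
  have hfib : ∀ n : ℕ, HasSum (fun q : Nat.Primes × ℕ => (JJ ∘ e2) (n, q))
      (Lr ((n : ℝ) + 2) * cc (n + 2)) := by
    intro n
    exact (hasSum_A n).mul_right (cc (n + 2))
  have hmain : HasSum (fun n : ℕ => Lr ((n : ℝ) + 2) * cc (n + 2)) (∑' q, JJ q) :=
    hJ2.prod_fiberwise hfib
  have hfe : (fun n : ℕ =>
      (zetaDerivR ((n : ℝ) + 2) / zetaR ((n : ℝ) + 2)) *
        ∑ d ∈ (n + 2).divisors,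
          (2 / Real.sqrt 3) * Real.sin (((d : ℝ) - 1) * π / 3) *
            (ArithmeticFunction.moebius ((n + 2) / d) : ℝ))
      = fun n : ℕ => -(Lr ((n : ℝ) + 2) * cc (n + 2)) := by
    funext n
    have hx : (1:ℝ) < (n : ℝ) + 2 := by
      have : (0:ℝ) ≤ (n:ℝ) := Nat.cast_nonneg n
      linarith
    rw [zeta_ratio_eq hx]
    have hc : (∑ d ∈ (n + 2).divisors,
        (2 / Real.sqrt 3) * Real.sin (((d : ℝ) - 1) * π / 3) *
          (ArithmeticFunction.moebius ((n + 2) / d) : ℝ)) = cc (n + 2) := rfl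
    rw [hc]
    ring
  rw [hfe, hS]
  exact hmain.neg
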